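/- Let M be a real symmetric matrix of the form M = k·I + A, where k is a real number and A is a symmetric matrix with zero diagonal and integer off-diagonal entries. If the multiplicity of the eigenvalue 0 of M is strictly greater than the maximum multiplicity of any nonzero eigenvalue of M, then k is an integer. -/

import Mathlib

open Polynomial Matrix Module

section Aux

variable {m : Type*} [Fintype m] [DecidableEq m]

/-- key matrix identity: `B - μ • 1 = U * diagonal (d - μ) * star U`. -/
private lemma herm_sub_smul {B : Matrix m m ℝ} (hB : B.IsHermitian) (μ : ℝ) :
    B - μ • (1 : Matrix m m ℝ) =
      (hB.eigenvectorUnitary : Matrix m m ℝ) *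
        diagonal (fun i => hB.eigenvalues i - μ) *
        star (hB.eigenvectorUnitary : Matrix m m ℝ) := by
  set U : Matrix m m ℝ := (hB.eigenvectorUnitary : Matrix m m ℝ) with hUdef
  have hU : U * star U = 1 := (Matrix.mem_unitaryGroup_iff).mp hB.eigenvectorUnitary.2
  have hspec : B = U * diagonal (RCLike.ofReal ∘ hB.eigenvalues) * star U := hB.spectral_theorem
  have hdiag : diagonal (RCLike.ofReal ∘ hB.eigenvalues) = diagonal hB.eigenvalues := by
    congr 1
  have hsplit : diagonal (fun i => hB.eigenvalues i - μ) =
      diagonal hB.eigenvalues - μ • (1 : Matrix m m ℝ) := by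
    ext i j
    by_cases h : i = j <;> simp [h, Matrix.one_apply, diagonal]
  rw [hsplit, mul_sub, sub_mul, ← hdiag, ← hspec]
  congr 1
  rw [Matrix.mul_smul, Matrix.smul_mul, mul_one, hU]

private lemma isUnit_det_unitary {B : Matrix m m ℝ} (hB : B.IsHermitian) :
    IsUnit (hB.eigenvectorUnitary : Matrix m m ℝ).det := by
  have hU : (hB.eigenvectorUnitary : Matrix m m ℝ) * star (hB.eigenvectorUnitary : Matrix m m ℝ) = 1 :=
    (Matrix.mem_unitaryGroup_iff).mp hB.eigenvectorUnitary.2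
  have := congrArg Matrix.det hU
  rw [Matrix.det_mul, Matrix.det_one] at this
  exact isUnit_iff_exists_inv.mpr ⟨_, this⟩

/-- the geometric multiplicity of `μ` equals the number of eigenvalues equal to `μ`. -/
private lemma finrank_eigenspace_eq_card {B : Matrix m m ℝ} (hB : B.IsHermitian) (μ : ℝ) :
    Module.finrank ℝ (Module.End.eigenspace (Matrix.toLin' B) μ) =
      Fintype.card {i // hB.eigenvalues i = μ} := by
  classical

  have hker : Module.End.eigenspace (Matrix.toLin' B) μ =
      LinearMap.ker (Matrix.mulVecLin (B - μ • 1)) := by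
    rw [Module.End.eigenspace_def]
    congr 1
    refine LinearMap.ext fun v => ?_
    funext i
    simp [Matrix.toLin'_apply, Matrix.sub_mulVec, Matrix.smul_mulVec,
      Matrix.one_mulVec, Module.End.one_apply]
  have hsU : IsUnit (star (hB.eigenvectorUnitary : Matrix m m ℝ)).det := by
    rw [Matrix.star_eq_conjTranspose, Matrix.det_conjTranspose]
    exact (isUnit_det_unitary hB).star
  have hrank : (B - μ • (1 : Matrix m m ℝ)).rank =
      Fintype.card {i // hB.eigenvalues i - μ ≠ 0} := by
    rw [herm_sub_smul hB μ,
      Matrix.rank_mul_eq_left_of_isUnit_det _ _ hsU,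
      Matrix.rank_mul_eq_right_of_isUnit_det _ _ (isUnit_det_unitary hB),
      Matrix.rank_diagonal]
  have hrn := LinearMap.finrank_range_add_finrank_ker (Matrix.mulVecLin (B - μ • (1 : Matrix m m ℝ)))
  rw [Module.finrank_pi] at hrn
  have hrank' : (B - μ • (1 : Matrix m m ℝ)).rank =
      Module.finrank ℝ (LinearMap.range (Matrix.mulVecLin (B - μ • (1 : Matrix m m ℝ)))) := rfl
  have hcc : Fintype.card {i // hB.eigenvalues i - μ ≠ 0} =
      Fintype.card {i // hB.eigenvalues i ≠ μ} :=
    Fintype.card_congr (Equiv.subtypeEquivRight fun i => by simp [sub_eq_zero])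
  have h1 : Fintype.card {i // hB.eigenvalues i ≠ μ} =
      Fintype.card m - Fintype.card {i // hB.eigenvalues i = μ} :=
    Fintype.card_subtype_compl _
  have h2 : Fintype.card {i // hB.eigenvalues i = μ} ≤ Fintype.card m :=
    Fintype.card_subtype_le _
  rw [hker]
  omega


/-- the characteristic polynomial of a real hermitian matrix is the product of
`X - eigenvalue`. -/
private lemma charpoly_eq_prod {B : Matrix m m ℝ} (hB : B.IsHermitian) :
    B.charpoly = ∏ i, (X - C (hB.eigenvalues i)) := by
  classical
  set U : Matrix m m ℝ := (hB.eigenvectorUnitary : Matrix m m ℝ) with hUdef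
  have hU : U * star U = 1 := (Matrix.mem_unitaryGroup_iff).mp hB.eigenvectorUnitary.2
  set D : Matrix m m ℝ := diagonal hB.eigenvalues with hD
  have hspec : B = U * D * star U := by
    have := hB.spectral_theorem
    have hdiag : diagonal (RCLike.ofReal ∘ hB.eigenvalues) = D := by rw [hD]; congr 1
    rw [this, hdiag]; rfl
  set mapC : Matrix m m ℝ →+* Matrix m m ℝ[X] := (C : ℝ →+* ℝ[X]).mapMatrix with hmapC
  have hcomm : mapC U * Matrix.scalar m (X : ℝ[X]) = Matrix.scalar m (X : ℝ[X]) * mapC U :=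
    (Matrix.scalar_commute (X : ℝ[X]) (fun r => Commute.all _ _) (mapC U)).symm
  have key : charmatrix B = mapC U * charmatrix D * mapC (star U) := by
    have step : mapC U * charmatrix D * mapC (star U)
        = Matrix.scalar m (X : ℝ[X]) * (mapC (U * star U)) - mapC (U * D * star U) := by
      rw [charmatrix, mul_sub, sub_mul, hcomm, mul_assoc (Matrix.scalar m (X : ℝ[X])),
        ← _root_.map_mul mapC U (star U), ← _root_.map_mul mapC U D,
        ← _root_.map_mul mapC (U * D) (star U)]
    rw [step, hU, _root_.map_one mapC, mul_one, ← hspec, charmatrix]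
  have hdet1 : (mapC U).det * (mapC (star U)).det = 1 := by
    rw [← Matrix.det_mul, ← _root_.map_mul mapC U (star U), hU, _root_.map_one mapC, Matrix.det_one]
  have hcharmD : charmatrix D = diagonal (fun i => (X : ℝ[X]) - C (hB.eigenvalues i)) := by
    ext i j
    by_cases h : i = j
    · subst h; simp [hD, charmatrix_apply_eq]
    · simp [hD, charmatrix_apply_ne _ _ _ h, diagonal_apply_ne _ h]
  calc B.charpoly = (mapC U * charmatrix D * mapC (star U)).det := by
        rw [Matrix.charpoly, key]
    _ = (mapC U).det * (charmatrix D).det * (mapC (star U)).det := by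
        rw [Matrix.det_mul, Matrix.det_mul]
    _ = (charmatrix D).det := by
        rw [mul_comm (mapC U).det, mul_assoc, hdet1, mul_one]
    _ = ∏ i, (X - C (hB.eigenvalues i)) := by rw [hcharmD, Matrix.det_diagonal]

end Aux

theorem diagonal_entry_is_integer
    (n : ℕ) (k : ℝ) (A : Matrix (Fin n) (Fin n) ℝ)
    (hAsymm : A.IsSymm)
    (hAdiag : ∀ i, A i i = 0)
    (hAint : ∀ i j, i ≠ j → ∃ z : ℤ, A i j = (z : ℝ))
    (M : Matrix (Fin n) (Fin n) ℝ)
    (hM : M = k • (1 : Matrix (Fin n) (Fin n) ℝ) + A)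
    (hmult : ∀ e : ℝ, e ≠ 0 →
      Module.finrank ℝ (Module.End.eigenspace (Matrix.toLin' M) e) <
      Module.finrank ℝ (Module.End.eigenspace (Matrix.toLin' M) 0)) :
    ∃ z : ℤ, k = (z : ℝ) := by
  classical
  have hA : A.IsHermitian := by
    rw [Matrix.IsHermitian, Matrix.conjTranspose]
    exact (Matrix.conjTranspose_eq_transpose_of_trivial A).trans hAsymm
  set d : Fin n → ℝ := hA.eigenvalues with hd
  -- relation between eigenspaces of M and of A
  have hES : ∀ e : ℝ, Module.End.eigenspace (Matrix.toLin' M) e =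
      Module.End.eigenspace (Matrix.toLin' A) (e - k) := by
    intro e
    rw [Module.End.eigenspace_def, Module.End.eigenspace_def]
    congr 1
    ext v i
    simp [hM, Matrix.toLin'_apply, Matrix.add_mulVec, Matrix.sub_mulVec,
      Matrix.smul_mulVec, Matrix.one_mulVec, Module.End.one_apply, sub_smul]
    ring_nf
  -- geometric multiplicities as eigenvalue counts
  have gc : ∀ μ : ℝ, Module.finrank ℝ (Module.End.eigenspace (Matrix.toLin' A) μ) =
      Fintype.card {i // d i = μ} := fun μ => finrank_eigenspace_eq_card hA μ
  -- hmult in terms of A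
  have hmultA : ∀ μ : ℝ, μ ≠ -k →
      Fintype.card {i // d i = μ} < Fintype.card {i // d i = -k} := by
    intro μ hμ
    have := hmult (μ + k) (by intro h; apply hμ; linarith)
    rw [hES, hES] at this
    simpa [gc] using this
  -- -k is an eigenvalue
  have hpos : 0 < Fintype.card {i // d i = -k} := by
    rcases Nat.eq_zero_or_pos (Fintype.card {i // d i = -k}) with h | h
    · exfalso
      have h1 := hmultA (-k + 1) (by intro hc; linarith)
      omega
    · exact h
  obtain ⟨i₀, hi₀⟩ : ∃ i, d i = -k := by
    rcases Fintype.card_pos_iff.mp hpos with ⟨⟨i, hi⟩⟩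
    exact ⟨i, hi⟩
  -- the integer matrix underlying A
  set A₀ : Matrix (Fin n) (Fin n) ℤ := fun i j =>
    if h : i = j then 0 else (hAint i j h).choose with hA₀
  have hmap : A₀.map ⇑(Int.castRingHom ℝ) = A := by
    ext i j
    by_cases h : i = j
    · subst h; rw [Matrix.map_apply]; simp [hA₀, hAdiag]
    · rw [Matrix.map_apply]; simp [hA₀, h, ((hAint i j h).choose_spec).symm]
  set p₀ : ℤ[X] := A₀.charpoly with hp₀
  have hcharA : A.charpoly = p₀.map (Int.castRingHom ℝ) := by
    rw [← hmap, Matrix.charpoly_map]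
  have hprod : A.charpoly = ∏ i, (X - C (d i)) := charpoly_eq_prod hA
  -- root multiplicity of charpoly = eigenvalue count
  have hcount : ∀ μ : ℝ, A.charpoly.rootMultiplicity μ = Fintype.card {i // d i = μ} := by
    intro μ
    rw [← Polynomial.count_roots, hprod]
    have : (∏ i, (X - C (d i))).roots = Finset.univ.val.map d := by
      have := Polynomial.roots_multiset_prod_X_sub_C (Finset.univ.val.map d)
      rwa [Multiset.map_map] at this
    rw [this, Multiset.count_map]
    rw [Fintype.card_subtype]
    congr 1
    simp [Finset.filter_congr_decidable, eq_comm]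
  -- x := -k is an algebraic number; let q be its minimal polynomial over ℚ
  set x : ℝ := -k with hx
  have hp₀x : Polynomial.aeval x p₀ = 0 := by
    have : A.charpoly.IsRoot x := by
      rw [hprod]
      simp only [Polynomial.IsRoot, Polynomial.eval_prod, Polynomial.eval_sub,
        Polynomial.eval_X, Polynomial.eval_C]
      exact Finset.prod_eq_zero (Finset.mem_univ i₀) (by rw [hi₀]; ring)
    rw [hcharA] at this
    simpa [Polynomial.aeval_def, Polynomial.IsRoot, Polynomial.eval_map] using this
  set pQ : ℚ[X] := p₀.map (Int.castRingHom ℚ) with hpQ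
  have hcomp : (algebraMap ℚ ℝ).comp (Int.castRingHom ℚ) = Int.castRingHom ℝ :=
    RingHom.ext_int _ _
  have hmapcomp : p₀.map (Int.castRingHom ℝ) = pQ.map (algebraMap ℚ ℝ) := by
    rw [hpQ, Polynomial.map_map, hcomp]
  have hpQx : Polynomial.aeval x pQ = 0 := by
    rw [Polynomial.aeval_def, ← Polynomial.eval_map, ← hmapcomp]
    rw [Polynomial.aeval_def, ← Polynomial.eval_map, algebraMap_int_eq] at hp₀x
    exact hp₀x
  have hpQne : pQ ≠ 0 := by
    have : pQ.Monic := (A₀.charpoly_monic).map _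
    exact this.ne_zero
  have hxalg : IsAlgebraic ℚ x := ⟨pQ, hpQne, hpQx⟩
  set q : ℚ[X] := minpoly ℚ x with hq
  have hqirr : Irreducible q := minpoly.irreducible (hxalg.isIntegral)
  have hqmonic : q.Monic := minpoly.monic (hxalg.isIntegral)
  have hqdvd : q ∣ pQ := minpoly.dvd ℚ x hpQx
  -- factor out the maximal power of q
  obtain ⟨mm, r, hr, hfac⟩ := WfDvdMonoid.max_power_factor hpQne hqirr
  -- every root of q over ℝ has charpoly multiplicity mm
  have hqsep : q.Separable := hqirr.separable
  have hqRsep : (q.map (algebraMap ℚ ℝ)).Separable := hqsep.map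
  have hmain : ∀ μ : ℝ, (q.map (algebraMap ℚ ℝ)).IsRoot μ →
      A.charpoly.rootMultiplicity μ = mm := by
    intro μ hμ
    have haevalμ : Polynomial.aeval μ q = 0 := by
      rwa [Polynomial.aeval_def, ← Polynomial.eval_map]
    have hminμ : minpoly ℚ μ = q := by
      exact (minpoly.eq_of_irreducible_of_monic hqirr haevalμ hqmonic).symm
    have hArw : A.charpoly = (q.map (algebraMap ℚ ℝ)) ^ mm * (r.map (algebraMap ℚ ℝ)) := by
      rw [hcharA]
      rw [hmapcomp, hfac, Polynomial.map_mul, Polynomial.map_pow]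
    have hne : (q.map (algebraMap ℚ ℝ)) ^ mm * (r.map (algebraMap ℚ ℝ)) ≠ 0 := by
      rw [← hArw]
      exact A.charpoly_monic.ne_zero
    rw [hArw, Polynomial.rootMultiplicity_mul hne]
    have h1 : ((q.map (algebraMap ℚ ℝ)) ^ mm).rootMultiplicity μ = mm := by
      rw [← Polynomial.count_roots, Polynomial.roots_pow, Multiset.count_nsmul,
        Polynomial.count_roots]
      have hle : (q.map (algebraMap ℚ ℝ)).rootMultiplicity μ ≤ 1 :=
        rootMultiplicity_le_one_of_separable hqRsep μ
      have hge : 1 ≤ (q.map (algebraMap ℚ ℝ)).rootMultiplicity μ :=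
        (Polynomial.rootMultiplicity_pos (Polynomial.map_monic_ne_zero hqmonic)).mpr hμ
      rw [le_antisymm hle hge, mul_one]
    have h2 : (r.map (algebraMap ℚ ℝ)).rootMultiplicity μ = 0 := by
      apply Polynomial.rootMultiplicity_eq_zero
      intro hroot
      apply hr
      rw [← hminμ]
      apply minpoly.dvd
      rwa [Polynomial.aeval_def, ← Polynomial.eval_map]
    omega
  -- x is a root of q over ℝ
  have hxroot : (q.map (algebraMap ℚ ℝ)).IsRoot x := by
    rw [Polynomial.IsRoot, Polynomial.eval_map, ← Polynomial.aeval_def]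
    exact minpoly.aeval ℚ x
  -- all real roots of q equal x
  have hallroots : ∀ μ : ℝ, (q.map (algebraMap ℚ ℝ)).IsRoot μ → μ = x := by
    intro μ hμ
    by_contra hne
    have := hmultA μ hne
    rw [← hcount, ← hcount, hmain μ hμ, hmain x hxroot] at this
    omega
  -- q splits over ℝ since it divides the charpoly which splits
  have hsplits : (q.map (algebraMap ℚ ℝ)).Splits := by
    have hPsplits : Polynomial.Splits A.charpoly := by
      rw [hprod]
      exact Polynomial.Splits.prod (fun i _ => Polynomial.Splits.X_sub_C _)
    apply Polynomial.Splits.of_dvd hPsplits (A.charpoly_monic.ne_zero)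
    rw [hcharA, hmapcomp]
    exact Polynomial.map_dvd _ hqdvd
  -- hence q has degree 1
  have hdeg : q.natDegree = 1 := by
    have hqRne : q.map (algebraMap ℚ ℝ) ≠ 0 := Polynomial.map_monic_ne_zero hqmonic
    have hcard : (q.map (algebraMap ℚ ℝ)).roots.card = (q.map (algebraMap ℚ ℝ)).natDegree :=
      Polynomial.splits_iff_card_roots.mp hsplits
    have hnodup : (q.map (algebraMap ℚ ℝ)).roots.Nodup := Polynomial.nodup_roots hqRsep
    have hsub : (q.map (algebraMap ℚ ℝ)).roots.toFinset ⊆ {x} := by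
      intro y hy
      rw [Multiset.mem_toFinset, Polynomial.mem_roots hqRne] at hy
      simp [hallroots y hy]
    have hcard1 : (q.map (algebraMap ℚ ℝ)).roots.card ≤ 1 := by
      rw [← Multiset.toFinset_card_of_nodup hnodup]
      simpa using Finset.card_le_card hsub
    have hdegpos : 1 ≤ q.natDegree := minpoly.natDegree_pos hxalg.isIntegral
    have : (q.map (algebraMap ℚ ℝ)).natDegree = q.natDegree :=
      Polynomial.natDegree_map_eq_of_injective (algebraMap ℚ ℝ).injective q
    have hxin : x ∈ (q.map (algebraMap ℚ ℝ)).roots := by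
      rw [Polynomial.mem_roots hqRne]; exact hxroot
    have : 1 ≤ (q.map (algebraMap ℚ ℝ)).roots.card := Multiset.card_pos_iff_exists_mem.mpr ⟨x, hxin⟩
    omega
  -- so x is rational
  have hqeq : q = X + C (q.coeff 0) := hqmonic.eq_X_add_C hdeg
  set c : ℚ := q.coeff 0 with hc
  have hxval : x = algebraMap ℚ ℝ (-c) := by
    have := minpoly.aeval ℚ x
    rw [← hq, hqeq] at this
    simp only [map_add, Polynomial.aeval_X, Polynomial.aeval_C] at this
    have : x = -(algebraMap ℚ ℝ c) := by linarith [this]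
    rw [this, map_neg]
  -- -c is integral over ℤ, hence an integer
  have hintc : Polynomial.aeval (-c) p₀ = 0 := by
    have h1 : algebraMap ℚ ℝ (Polynomial.aeval (-c) p₀) = 0 := by
      rw [← Polynomial.aeval_algebraMap_apply, ← hxval]
      exact hp₀x
    exact (map_eq_zero_iff _ (algebraMap ℚ ℝ).injective).mp h1
  have hint : IsIntegral ℤ (-c) := ⟨p₀, A₀.charpoly_monic, by
    rwa [← Polynomial.aeval_def]⟩
  obtain ⟨z, hz⟩ := IsIntegrallyClosed.isIntegral_iff.mp hint
  refine ⟨-z, ?_⟩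
  have : k = -x := by rw [hx]; ring
  rw [this, hxval, ← hz]
  simp
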